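/- Let n, r, k ∈ ℕ with r ≥ 2, r dividing n, and 1 ≤ k < n/r. Then there exists a graph G on n vertices whose degree sequence d_1 ≤ ⋯ ≤ d_n satisfies: d_i = (r−2)n/r + k − 1 for all 1 ≤ i ≤ k; d_i = (r−1)n/r for all k+1 ≤ i ≤ (r−2)n/r + k; d_i = n − k − 1 for all (r−2)n/r + k + 1 ≤ i ≤ n − k + 1; and d_i = n − 1 for all n − k + 2 ≤ i ≤ n; but G contains no perfect K_r-packing. -/

import Mathlib

/-- The degree of a vertex. -/
noncomputable def deg {V : Type*} (G : SimpleGraph V) (v : V) : ℕ := Nat.card (G.neighborSet v)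

/-- A perfect `K_r`-packing: a collection of vertex-disjoint `r`-cliques covering all vertices. -/
def HasPerfectKrPacking {n : ℕ} (G : SimpleGraph (Fin n)) (r : ℕ) : Prop :=
  ∃ P : Finset (Finset (Fin n)),
    (∀ p ∈ P, p.card = r ∧ G.IsClique (p : Set (Fin n))) ∧
    (P : Set (Finset (Fin n))).PairwiseDisjoint id ∧
    P.biUnion id = Finset.univ

namespace Stmt11Aux

def adjRel (k b c m i j : ℕ) : Prop :=
  i ≠ j ∧ ¬(i < k ∧ j < k) ∧ ¬(i < k ∧ b ≤ j ∧ j < c) ∧ ¬(j < k ∧ b ≤ i ∧ i < c) ∧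
    ¬(k ≤ i ∧ i < b ∧ k ≤ j ∧ j < b ∧ (i - k) / m = (j - k) / m)

instance (k b c m : ℕ) : DecidableRel (adjRel k b c m) := fun _ _ => by
  unfold adjRel; infer_instance

def graphG (n k b c m : ℕ) : SimpleGraph (Fin n) where
  Adj i j := adjRel k b c m i.val j.val
  symm := ⟨by
    rintro i j ⟨h1, h2, h3, h4, h5⟩
    exact ⟨h1.symm, fun ⟨a, b⟩ => h2 ⟨b, a⟩, h4, h3,
      fun ⟨a, b, c', d, e⟩ => h5 ⟨c', d, a, b, e.symm⟩⟩⟩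
  loopless := ⟨fun i h => h.1 rfl⟩

instance (n k b c m : ℕ) : DecidableRel (graphG n k b c m).Adj := fun i j =>
  inferInstanceAs (Decidable (adjRel k b c m i.val j.val))

lemma adj_iff {n k b c m : ℕ} {i j : Fin n} :
    (graphG n k b c m).Adj i j ↔ adjRel k b c m i.val j.val := Iff.rfl

lemma card_filter_val {n : ℕ} (p : ℕ → Prop) [DecidablePred p] :
    (Finset.univ.filter (fun v : Fin n => p v.val)).card = ((Finset.range n).filter p).card := by
  apply Finset.card_bij (fun v _ => v.val)
  · intro a ha
    simp only [Finset.mem_filter, Finset.mem_range, Finset.mem_univ, true_and] at ha ⊢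
    exact ⟨a.is_lt, ha⟩
  · intro a _ b _ h; exact Fin.val_injective h
  · intro b hb
    simp only [Finset.mem_filter, Finset.mem_range] at hb
    exact ⟨⟨b, hb.1⟩, by simp [hb.2], rfl⟩

lemma deg_eq_filter {n : ℕ} (G : SimpleGraph (Fin n)) [DecidableRel G.Adj] (v : Fin n) :
    deg G v = (Finset.univ.filter (fun w => G.Adj v w)).card := by
  rw [deg, Nat.card_eq_fintype_card, SimpleGraph.card_neighborSet_eq_degree,
    SimpleGraph.degree, SimpleGraph.neighborFinset_eq_filter]

lemma deg_eq_sub {n : ℕ} (G : SimpleGraph (Fin n)) [DecidableRel G.Adj] (v : Fin n) :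
    deg G v = n - (Finset.univ.filter (fun w => ¬ G.Adj v w)).card := by
  have := Finset.card_filter_add_card_filter_not (s := (Finset.univ : Finset (Fin n)))
    (fun w => G.Adj v w)
  rw [Finset.card_univ, Fintype.card_fin] at this
  rw [deg_eq_filter]
  omega

lemma div_eq_iff' {m : ℕ} (hm : 0 < m) {a q : ℕ} : a / m = q ↔ q * m ≤ a ∧ a < q * m + m := by
  constructor
  · rintro rfl
    refine ⟨Nat.div_mul_le_self a m, ?_⟩
    have h1 := Nat.div_add_mod a m
    have h2 := Nat.mod_lt a hm
    rw [Nat.mul_comm] at h1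
    linarith
  · rintro ⟨h1, h2⟩
    exact Nat.div_eq_of_lt_le h1 (by rwa [Nat.succ_mul])

variable {n k b c m X : ℕ}

lemma degA (hk : 1 ≤ k) (hm : k + 1 ≤ m) (hn : n = X + 2 * m) (hb : b = k + X)
    (hc : c = n - k + 1) {v : Fin n} (hv : v.val < k) :
    deg (graphG n k b c m) v = X + k - 1 := by
  have hvn := v.is_lt
  rw [deg_eq_sub]
  have hiff : ∀ w : Fin n, ¬ (graphG n k b c m).Adj v w ↔
      (w.val < k ∨ (b ≤ w.val ∧ w.val < c)) := by
    intro w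
    constructor
    · intro h
      by_contra hcon
      push_neg at hcon
      refine h (adj_iff.mpr ⟨?_, ?_, ?_, ?_, ?_⟩)
      · omega
      · rintro ⟨_, h2⟩; omega
      · rintro ⟨_, h2, h3⟩
        have h4 := hcon.2 h2
        omega
      · rintro ⟨h1, _⟩; omega
      · rintro ⟨h1, _⟩; omega
    · rintro (h | ⟨h1, h2⟩) hadj
      · exact (adj_iff.mp hadj).2.1 ⟨hv, h⟩
      · exact (adj_iff.mp hadj).2.2.1 ⟨hv, h1, h2⟩
  rw [Finset.filter_congr (fun w _ => by rw [hiff w]),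
    card_filter_val (fun x => x < k ∨ (b ≤ x ∧ x < c))]
  have hset : (Finset.range n).filter (fun x => x < k ∨ (b ≤ x ∧ x < c)) =
      Finset.range k ∪ Finset.Ico b c := by
    ext x
    simp only [Finset.mem_filter, Finset.mem_range, Finset.mem_union, Finset.mem_Ico]
    omega
  rw [hset, Finset.card_union_of_disjoint, Finset.card_range, Nat.card_Ico]
  · omega
  · rw [Finset.disjoint_left]
    intro x hx hx'
    simp only [Finset.mem_range, Finset.mem_Ico] at hx hx'
    omega

lemma degB (hk : 1 ≤ k) (hm : k + 1 ≤ m) (hn : n = X + 2 * m) (hb : b = k + X)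
    (hc : c = n - k + 1) (hXm : ∃ t, X = t * m) {v : Fin n}
    (hv1 : k ≤ v.val) (hv2 : v.val < b) :
    deg (graphG n k b c m) v = X + m := by
  have hvn := v.is_lt
  have hm0 : 0 < m := by omega
  obtain ⟨t, hXt⟩ := hXm
  rw [deg_eq_sub]
  obtain ⟨P, hP⟩ : ∃ P, P = (v.val - k) / m * m := ⟨_, rfl⟩
  have hpv : (v.val - k) / m * m ≤ v.val - k ∧ v.val - k < (v.val - k) / m * m + m :=
    (div_eq_iff' hm0).mp rfl
  have hpt : (v.val - k) / m < t := by
    have h1 : v.val - k < X := by omega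
    rw [hXt] at h1
    exact (Nat.div_lt_iff_lt_mul hm0).mpr h1
  have hPX : (v.val - k) / m * m + m ≤ X := by
    have h1 : ((v.val - k) / m + 1) * m ≤ t * m := Nat.mul_le_mul_right m hpt
    rw [Nat.succ_mul] at h1
    omega
  rw [← hP] at hpv hPX
  have hiff : ∀ w : Fin n, ¬ (graphG n k b c m).Adj v w ↔
      (k + P ≤ w.val ∧ w.val < k + P + m) := by
    intro w
    constructor
    · intro h
      by_contra hcon
      push_neg at hcon
      refine h (adj_iff.mpr ⟨?_, ?_, ?_, ?_, ?_⟩)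
      · omega
      · rintro ⟨h1, _⟩; omega
      · rintro ⟨h1, _⟩; omega
      · rintro ⟨_, h2, _⟩; omega
      · rintro ⟨_, _, hw1, hw2, heq⟩
        have hw3 := (div_eq_iff' hm0).mp heq.symm
        rw [← hP] at hw3
        omega
    · rintro ⟨h1, h2⟩ hadj
      have had := adj_iff.mp hadj
      have hdiv : (w.val - k) / m = (v.val - k) / m := by
        refine (div_eq_iff' hm0).mpr ?_
        rw [← hP]
        omega
      exact had.2.2.2.2 ⟨hv1, hv2, by omega, by omega, hdiv.symm⟩
  rw [Finset.filter_congr (fun w _ => by rw [hiff w]),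
    card_filter_val (fun x => k + P ≤ x ∧ x < k + P + m)]
  have hset : (Finset.range n).filter (fun x => k + P ≤ x ∧ x < k + P + m) =
      Finset.Ico (k + P) (k + P + m) := by
    ext x
    simp only [Finset.mem_filter, Finset.mem_range, Finset.mem_Ico]
    omega
  rw [hset, Nat.card_Ico]
  omega

lemma degC (hk : 1 ≤ k) (hm : k + 1 ≤ m) (hn : n = X + 2 * m) (hb : b = k + X)
    (hc : c = n - k + 1) {v : Fin n} (hv1 : b ≤ v.val) (hv2 : v.val < c) :
    deg (graphG n k b c m) v = n - k - 1 := by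
  have hvn := v.is_lt
  rw [deg_eq_sub]
  have hiff : ∀ w : Fin n, ¬ (graphG n k b c m).Adj v w ↔
      (w.val < k ∨ w.val = v.val) := by
    intro w
    constructor
    · intro h
      by_contra hcon
      push_neg at hcon
      refine h (adj_iff.mpr ⟨?_, ?_, ?_, ?_, ?_⟩)
      · omega
      · rintro ⟨h1, _⟩; omega
      · rintro ⟨h1, _⟩; omega
      · rintro ⟨h1, _⟩; omega
      · rintro ⟨_, h2, _⟩; omega
    · rintro (h | h) hadj
      · exact (adj_iff.mp hadj).2.2.2.1 ⟨h, hv1, hv2⟩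
      · exact (adj_iff.mp hadj).1 h.symm
  rw [Finset.filter_congr (fun w _ => by rw [hiff w]),
    card_filter_val (fun x => x < k ∨ x = v.val)]
  have hset : (Finset.range n).filter (fun x => x < k ∨ x = v.val) =
      insert v.val (Finset.range k) := by
    ext x
    simp only [Finset.mem_filter, Finset.mem_range, Finset.mem_insert]
    omega
  rw [hset, Finset.card_insert_of_notMem (by simp only [Finset.mem_range]; omega),
    Finset.card_range]
  omega

lemma degD (hk : 1 ≤ k) (hm : k + 1 ≤ m) (hn : n = X + 2 * m) (hb : b = k + X)
    (hc : c = n - k + 1) {v : Fin n} (hv : c ≤ v.val) :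
    deg (graphG n k b c m) v = n - 1 := by
  have hvn := v.is_lt
  rw [deg_eq_sub]
  have hiff : ∀ w : Fin n, ¬ (graphG n k b c m).Adj v w ↔ w.val = v.val := by
    intro w
    constructor
    · intro h
      by_contra hcon
      refine h (adj_iff.mpr ⟨?_, ?_, ?_, ?_, ?_⟩)
      · omega
      · rintro ⟨h1, _⟩; omega
      · rintro ⟨h1, _⟩; omega
      · rintro ⟨_, _, h3⟩; omega
      · rintro ⟨_, h2, _⟩; omega
    · rintro h hadj
      exact (adj_iff.mp hadj).1 h.symm
  rw [Finset.filter_congr (fun w _ => by rw [hiff w]),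
    card_filter_val (fun x => x = v.val)]
  have hset : (Finset.range n).filter (fun x => x = v.val) = {v.val} := by
    ext x
    simp only [Finset.mem_filter, Finset.mem_range, Finset.mem_singleton]
    omega
  rw [hset, Finset.card_singleton]

lemma noPacking (hk : 1 ≤ k) (hm : k + 1 ≤ m) (hn : n = X + 2 * m) (hb : b = k + X)
    (hc : c = n - k + 1) {r : ℕ} (hr : 2 ≤ r) (hX : X = (r - 2) * m) :
    ¬ HasPerfectKrPacking (graphG n k b c m) r := by
  rintro ⟨P, hP1, hP2, hP3⟩
  have hm0 : 0 < m := by omega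
  have key : ∀ a : Fin n, a.val < k →
      ∃ (w : Fin n) (p : Finset (Fin n)), c ≤ w.val ∧ p ∈ P ∧ a ∈ p ∧ w ∈ p := by
    intro a ha
    have hamem : a ∈ P.biUnion id := by rw [hP3]; exact Finset.mem_univ a
    obtain ⟨p, hpP, hap⟩ := Finset.mem_biUnion.mp hamem
    simp only [id] at hap
    by_contra hcon
    push_neg at hcon
    have hwc : ∀ w ∈ p, w.val < c := by
      intro w hw
      by_contra h'
      exact hcon w p (by omega) hpP hap hw
    have hB : ∀ w ∈ p.erase a, k ≤ w.val ∧ w.val < b := by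
      intro w hw
      obtain ⟨hne, hwp⟩ := Finset.mem_erase.mp hw
      have hadj := (hP1 p hpP).2 (Finset.mem_coe.mpr hap) (Finset.mem_coe.mpr hwp) (Ne.symm hne)
      have h5 := adj_iff.mp hadj
      have hwcc := hwc w hwp
      constructor
      · by_contra hk'
        exact h5.2.1 ⟨ha, by omega⟩
      · by_contra hb'
        exact h5.2.2.1 ⟨ha, by omega, hwcc⟩
    have hcard : (p.erase a).card = r - 1 := by
      rw [Finset.card_erase_of_mem hap, (hP1 p hpP).1]
    have hinj : (p.erase a).card ≤ (Finset.range (r - 2)).card := by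
      apply Finset.card_le_card_of_injOn (fun w => (w.val - k) / m)
      · intro w hw
        have hbw := hB w hw
        simp only [Finset.coe_range, Set.mem_Iio]
        have h1 : w.val - k < (r - 2) * m := by rw [← hX]; omega
        exact (Nat.div_lt_iff_lt_mul hm0).mpr h1
      · intro w hw w' hw' heq
        by_contra hne
        have hadj := (hP1 p hpP).2
          (Finset.mem_coe.mpr (Finset.mem_of_mem_erase hw))
          (Finset.mem_coe.mpr (Finset.mem_of_mem_erase hw')) hne
        exact (adj_iff.mp hadj).2.2.2.2
          ⟨(hB w hw).1, (hB w hw).2, (hB w' hw').1, (hB w' hw').2, heq⟩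
    rw [hcard, Finset.card_range] at hinj
    omega
  choose w p hwc hpP hap hwp using key
  classical
  have hcardle : (Finset.univ.filter (fun v : Fin n => v.val < k)).card ≤
      (Finset.univ.filter (fun v : Fin n => c ≤ v.val)).card := by
    apply Finset.card_le_card_of_injOn (fun a => if h : a.val < k then w a h else a)
    · intro a ha'
      simp only [Finset.coe_filter, Finset.mem_filter, Finset.mem_univ, true_and, Set.mem_setOf_eq] at ha' ⊢
      rw [dif_pos ha']
      exact hwc a ha'
    · intro a ha' a' ha'' heq0
      simp only [Finset.coe_filter, Finset.mem_univ, true_and, Set.mem_setOf_eq] at ha' ha''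
      have heq : w a ha' = w a' ha'' := by
        simpa only [dif_pos ha', dif_pos ha''] using heq0
      have hpp : p a ha' = p a' ha'' := by
        by_contra hne
        have hdis := hP2 (Finset.mem_coe.mpr (hpP a ha')) (Finset.mem_coe.mpr (hpP a' ha'')) hne
        exact (Finset.disjoint_left.mp hdis) (hwp a ha') (heq ▸ hwp a' ha'')
      by_contra hne
      have hadj := (hP1 _ (hpP a ha')).2 (Finset.mem_coe.mpr (hap a ha'))
        (Finset.mem_coe.mpr (hpp ▸ hap a' ha'')) hne
      exact (adj_iff.mp hadj).2.1 ⟨ha', ha''⟩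
  rw [card_filter_val (fun x => x < k), card_filter_val (fun x => c ≤ x)] at hcardle
  have h1 : (Finset.range n).filter (fun x => x < k) = Finset.range k := by
    ext x
    simp only [Finset.mem_filter, Finset.mem_range]
    omega
  have h2 : (Finset.range n).filter (fun x => c ≤ x) = Finset.Ico c n := by
    ext x
    simp only [Finset.mem_filter, Finset.mem_range, Finset.mem_Ico]
    omega
  rw [h1, h2, Finset.card_range, Nat.card_Ico] at hcardle
  omega

end Stmt11Aux

/-- Let `r ≥ 2` divide `n` and `1 ≤ k < n/r`. There is a graph `G` on `n` vertices whose
nondecreasing degree sequence `d` (realised via a permutation `σ` of the vertices, 1-based: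
`d_i = d ⟨i-1⟩`) satisfies `d_i = (r-2)n/r + k - 1` for `1 ≤ i ≤ k`, `d_i = (r-1)n/r` for
`k+1 ≤ i ≤ (r-2)n/r + k`, `d_i = n - k - 1` for `(r-2)n/r + k + 1 ≤ i ≤ n - k + 1`, and
`d_i = n - 1` for `n - k + 2 ≤ i ≤ n`, but `G` has no perfect `K_r`-packing. -/
theorem stmt11 (n r k : ℕ) (hr : 2 ≤ r) (hdvd : r ∣ n) (hk1 : 1 ≤ k) (hk2 : k < n / r) :
    ∃ (G : SimpleGraph (Fin n)) (d : Fin n → ℕ) (σ : Equiv.Perm (Fin n)),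
      Monotone d ∧ (∀ i, d i = deg G (σ i)) ∧
      (∀ i : Fin n,
        ((i : ℕ) + 1 ≤ k → d i = (r - 2) * (n / r) + k - 1) ∧
        (k + 1 ≤ (i : ℕ) + 1 ∧ (i : ℕ) + 1 ≤ (r - 2) * (n / r) + k →
          d i = (r - 1) * (n / r)) ∧
        ((r - 2) * (n / r) + k + 1 ≤ (i : ℕ) + 1 ∧ (i : ℕ) + 1 ≤ n - k + 1 →
          d i = n - k - 1) ∧
        (n - k + 2 ≤ (i : ℕ) + 1 → d i = n - 1)) ∧
      ¬ HasPerfectKrPacking G r := by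
  classical
  open Stmt11Aux in
  obtain ⟨m, hnm⟩ := hdvd
  have hr0 : 0 < r := by omega
  have hmr : n / r = m := by rw [hnm, Nat.mul_div_cancel_left m hr0]
  rw [hmr] at hk2
  have hm1 : k + 1 ≤ m := hk2
  set X := (r - 2) * m with hX
  have hn' : n = X + 2 * m := by
    rw [hnm, hX]
    have h1 : r = (r - 2) + 2 := by omega
    calc r * m = ((r - 2) + 2) * m := by rw [← h1]
    _ = (r - 2) * m + 2 * m := by rw [Nat.add_mul]
  set b := k + X with hb
  set c := n - k + 1 with hc
  have hrm1 : (r - 1) * m = X + m := by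
    rw [hX]
    have h1 : r - 1 = (r - 2) + 1 := by omega
    rw [h1, Nat.succ_mul]
  refine ⟨graphG n k b c m,
    fun i => if i.val < k then X + k - 1 else if i.val < b then X + m
      else if i.val < c then n - k - 1 else n - 1,
    Equiv.refl _, ?_, ?_, ?_, ?_⟩
  · intro i j hij
    have hij' : i.val ≤ j.val := hij
    dsimp only
    split_ifs <;> omega
  · intro i
    simp only [Equiv.refl_apply]
    by_cases h1 : i.val < k
    · rw [if_pos h1, degA hk1 hm1 hn' hb hc h1]
    · rw [if_neg h1]
      by_cases h2 : i.val < b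
      · rw [if_pos h2, degB hk1 hm1 hn' hb hc ⟨r - 2, hX⟩ (by omega) h2]
      · rw [if_neg h2]
        by_cases h3 : i.val < c
        · rw [if_pos h3, degC hk1 hm1 hn' hb hc (by omega) h3]
        · rw [if_neg h3, degD hk1 hm1 hn' hb hc (by omega)]
  · intro i
    dsimp only
    refine ⟨?_, ?_, ?_, ?_⟩
    · intro h
      rw [hmr, ← hX]
      have h1 : i.val < k := by omega
      rw [if_pos h1]
    · rintro ⟨h1, h2⟩
      rw [hmr, ← hX] at h2
      rw [hmr, hrm1]
      rw [if_neg (by omega), if_pos (by omega)]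
    · rintro ⟨h1, h2⟩
      rw [hmr, ← hX] at h1
      rw [if_neg (by omega), if_neg (by omega), if_pos (by omega)]
    · intro h
      rw [if_neg (by omega), if_neg (by omega), if_neg (by omega)]
  · exact noPacking hk1 hm1 hn' hb hc hr hX
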